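/- Let G be a finite simple graph without isolated vertices. If (p_m) is a sequence of reals with p_m > 1 and p_m → 1, and for each m, λ_m is an eigenvalue of Δ_{p_m} with λ_m → λ, then λ is an eigenvalue of Δ_1. -/

import Mathlib

open scoped BigOperators Pointwise NNReal Classical

noncomputable section

/-! ### The graph `p`-Laplacian: Rayleigh quotients, genus, variational eigenvalues -/

/-- `Σ_{{i,j}∈E} |x_i − x_j|^p` (each unordered edge counted once). -/
def TVp {n : ℕ} (G : SimpleGraph (Fin n)) [DecidableRel G.Adj] (p : ℝ) (x : Fin n → ℝ) : ℝ :=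
  (∑ i : Fin n, ∑ j : Fin n, if G.Adj i j then |x i - x j| ^ p else 0) / 2

/-- `Σ_{i∈V} deg(i)·|x_i|^p`. -/
def Np {n : ℕ} (G : SimpleGraph (Fin n)) [DecidableRel G.Adj] (p : ℝ) (x : Fin n → ℝ) : ℝ :=
  ∑ i : Fin n, (G.degree i : ℝ) * |x i| ^ p

/-- The `p`-Rayleigh quotient `F_p`. -/
def Fp {n : ℕ} (G : SimpleGraph (Fin n)) [DecidableRel G.Adj] (p : ℝ) (x : Fin n → ℝ) : ℝ :=
  TVp G p x / Np G p x

/-- A set is (centrally) symmetric if `S = -S`. -/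
def SymmSet {n : ℕ} (S : Set (Fin n → ℝ)) : Prop := ∀ x ∈ S, -x ∈ S

/-- There is a continuous odd map from `S` to the unit sphere `𝕊^{k-1} ⊂ ℝ^k`. -/
def HasOddMapToSphere {n : ℕ} (S : Set (Fin n → ℝ)) (k : ℕ) : Prop :=
  ∃ φ : (Fin n → ℝ) → EuclideanSpace ℝ (Fin k),
    ContinuousOn φ S ∧ (∀ x ∈ S, ‖φ x‖ = 1) ∧ ∀ x ∈ S, φ (-x) = -φ x

/-- There is a continuous odd map from the unit sphere `𝕊^{k-1} ⊂ ℝ^k` to `S`. -/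
def HasOddMapFromSphere {n : ℕ} (S : Set (Fin n → ℝ)) (k : ℕ) : Prop :=
  ∃ φ : EuclideanSpace ℝ (Fin k) → (Fin n → ℝ),
    ContinuousOn φ (Metric.sphere (0 : EuclideanSpace ℝ (Fin k)) 1) ∧
    (∀ x ∈ Metric.sphere (0 : EuclideanSpace ℝ (Fin k)) 1, φ x ∈ S) ∧
    ∀ x ∈ Metric.sphere (0 : EuclideanSpace ℝ (Fin k)) 1, φ (-x) = -φ x

/-- The Krasnoselskii genus `γ⁻`. -/
def genNeg {n : ℕ} (S : Set (Fin n → ℝ)) : ℕ :=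
  if S.Nonempty ∧ SymmSet S then sInf {k | 1 ≤ k ∧ HasOddMapToSphere S k} else 0

/-- The index `γ⁺`. -/
def genPos {n : ℕ} (S : Set (Fin n → ℝ)) : ℕ :=
  if S.Nonempty ∧ SymmSet S then sSup {k | 1 ≤ k ∧ HasOddMapFromSphere S k} else 0

/-- Admissible sets for the min-max principle: symmetric compact subsets of `ℝ^n∖{0}`. -/
def Admissible {n : ℕ} (S : Set (Fin n → ℝ)) : Prop :=
  IsCompact S ∧ (0 : Fin n → ℝ) ∉ S ∧ SymmSet S

/-- The variational eigenvalues `λ_k⁻(Δ_p)`. -/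
def lamNeg {n : ℕ} (G : SimpleGraph (Fin n)) [DecidableRel G.Adj] (p : ℝ) (k : ℕ) : ℝ :=
  sInf {r | ∃ S : Set (Fin n → ℝ), Admissible S ∧ k ≤ genNeg S ∧ r = sSup (Fp G p '' S)}

/-- The min-max eigenvalues `λ_k⁺(Δ_p)`. -/
def lamPos {n : ℕ} (G : SimpleGraph (Fin n)) [DecidableRel G.Adj] (p : ℝ) (k : ℕ) : ℝ :=
  sInf {r | ∃ S : Set (Fin n → ℝ), Admissible S ∧ k ≤ genPos S ∧ r = sSup (Fp G p '' S)}

/-! ### Eigenpairs of `Δ_p` -/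

/-- The set-valued sign: `Sgn(t) = {1}` if `t>0`, `[-1,1]` if `t=0`, `{-1}` if `t<0`. -/
def Sgn (t : ℝ) : Set ℝ := if 0 < t then {1} else if t < 0 then {-1} else Set.Icc (-1) 1

/-- Eigenpairs of the graph `p`-Laplacian for `p > 1`.  (Note that for `t = 0` the
expression `|t|^(p-2) * t` equals `0`, matching the convention `|t|^{p-2}t = 0`.) -/
def IsEigenpairP {n : ℕ} (G : SimpleGraph (Fin n)) [DecidableRel G.Adj] (p lam : ℝ)
    (x : Fin n → ℝ) : Prop :=
  x ≠ 0 ∧ ∀ i, (∑ j : Fin n, if G.Adj i j then |x i - x j| ^ (p - 2) * (x i - x j) else 0) =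
    lam * (G.degree i : ℝ) * (|x i| ^ (p - 2) * x i)

/-- Eigenpairs of the graph `1`-Laplacian. -/
def IsEigenpair1 {n : ℕ} (G : SimpleGraph (Fin n)) [DecidableRel G.Adj] (lam : ℝ)
    (x : Fin n → ℝ) : Prop :=
  x ≠ 0 ∧ ∃ z : Fin n → Fin n → ℝ,
    (∀ i j, G.Adj i j → z i j ∈ Sgn (x i - x j)) ∧
    (∀ i j, G.Adj i j → z i j = -z j i) ∧
    ∀ i, (∑ j : Fin n, if G.Adj i j then z i j else 0) ∈
      (fun s => lam * (G.degree i : ℝ) * s) '' Sgn (x i)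

/-- Eigenpairs of `Δ_p` for `p ≥ 1` (with the `1`-Laplacian convention at `p = 1`). -/
def IsEigenpair {n : ℕ} (G : SimpleGraph (Fin n)) [DecidableRel G.Adj] (p lam : ℝ)
    (x : Fin n → ℝ) : Prop :=
  (p = 1 ∧ IsEigenpair1 G lam x) ∨ (1 < p ∧ IsEigenpairP G p lam x)

/-! ### Cheeger constants -/

/-- `|∂A|`: the number of edges with exactly one endpoint in `A`. -/
def eBoundary {n : ℕ} (G : SimpleGraph (Fin n)) [DecidableRel G.Adj] (A : Finset (Fin n)) : ℕ :=
  ∑ i ∈ A, ∑ j ∈ Aᶜ, if G.Adj i j then 1 else 0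

/-- `vol(A) = Σ_{i∈A} deg(i)`. -/
def volG {n : ℕ} (G : SimpleGraph (Fin n)) [DecidableRel G.Adj] (A : Finset (Fin n)) : ℕ :=
  ∑ i ∈ A, G.degree i

/-- The multi-way Cheeger constants `h_k`. -/
def cheeger {n : ℕ} (G : SimpleGraph (Fin n)) [DecidableRel G.Adj] (k : ℕ) : ℝ :=
  sInf {r | ∃ A : Fin k → Finset (Fin n), (∀ i, (A i).Nonempty) ∧
    (∀ i j, i ≠ j → Disjoint (A i) (A j)) ∧
    r = ⨆ i, (eBoundary G (A i) : ℝ) / (volG G (A i) : ℝ)}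
/-! ### The map Φ -/

/-- `Φ_c(x)_i = |x_i|^c · sign(x_i)`. -/
def Phi {n : ℕ} (c : ℝ) (x : Fin n → ℝ) : Fin n → ℝ := fun i => |x i| ^ c * Real.sign (x i)

/-! ### The simplicial complex `K_n` and the modified Cheeger constants -/

/-- The vector `1_A - 1_B`. -/
def charVec {n : ℕ} (A B : Finset (Fin n)) : Fin n → ℝ :=
  fun i => if i ∈ A then 1 else if i ∈ B then -1 else 0

/-- The inclusion order on pairs of sets: `(A,B) ≺ (A',B')` iff `A ⊆ A'` and `B ⊆ B'`. -/
def pairLE {n : ℕ} (a b : Finset (Fin n) × Finset (Fin n)) : Prop := a.1 ⊆ b.1 ∧ a.2 ⊆ b.2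

/-- The geometric realization `|K(𝒜)|`: the union over all chains of elements of `𝒜` of the
convex hulls of the corresponding vectors `1_A - 1_B`. -/
def geomComplex {n : ℕ} (𝒜 : Set (Finset (Fin n) × Finset (Fin n))) : Set (Fin n → ℝ) :=
  ⋃ (C : Set (Finset (Fin n) × Finset (Fin n))) (_ : C ⊆ 𝒜) (_ : IsChain pairLE C),
    convexHull ℝ ((fun ab => charVec ab.1 ab.2) '' C)

/-- The modified combinatorial `k`-way Cheeger constant `ĥ_k⁻`. -/
def hHatNeg {n : ℕ} (G : SimpleGraph (Fin n)) [DecidableRel G.Adj] (k : ℕ) : ℝ :=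
  sInf {r | ∃ 𝒜 : Set (Finset (Fin n) × Finset (Fin n)),
    (∀ ab ∈ 𝒜, Disjoint ab.1 ab.2 ∧ (ab.1 ∪ ab.2).Nonempty) ∧
    k ≤ genNeg (geomComplex 𝒜) ∧
    r = sSup ((fun ab : Finset (Fin n) × Finset (Fin n) =>
      ((eBoundary G ab.1 : ℝ) + (eBoundary G ab.2 : ℝ)) / (volG G (ab.1 ∪ ab.2) : ℝ)) '' 𝒜)}

/-! ### Subpartitions into cliques and the pseudo-independence number -/

/-- `c(V_i) = 1` if `|V_i| ≤ 2` and `c(V_i) = 2` if `|V_i| ≥ 3`. -/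
def cOf {n : ℕ} (A : Finset (Fin n)) : ℕ := if A.card ≤ 2 then 1 else 2

/-- A subpartition of `V` into sets each inducing a complete subgraph of `G`. -/
def IsCliqueSubpartition {n : ℕ} (G : SimpleGraph (Fin n)) (P : Finset (Finset (Fin n))) : Prop :=
  (∀ A ∈ P, A.Nonempty ∧ G.IsClique (A : Set (Fin n))) ∧
    ∀ A ∈ P, ∀ B ∈ P, A ≠ B → Disjoint A B

/-- The members of `P` are pairwise non-adjacent: every edge of `G` meets at most one of them. -/
def PairwiseNonAdjacent {n : ℕ} (G : SimpleGraph (Fin n)) (P : Finset (Finset (Fin n))) : Prop :=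
  ∀ i j, G.Adj i j → ∀ A ∈ P, ∀ B ∈ P, (i ∈ A ∨ j ∈ A) → (i ∈ B ∨ j ∈ B) → A = B

/-- The pseudo-independence number `α_*(G)`. -/
def pseudoIndepNum {n : ℕ} (G : SimpleGraph (Fin n)) : ℕ :=
  sSup {m | ∃ P : Finset (Finset (Fin n)), IsCliqueSubpartition G P ∧
    PairwiseNonAdjacent G P ∧ m = ∑ A ∈ P, cOf A}

/-- `h_*(P)`. -/
def hStar {n : ℕ} (G : SimpleGraph (Fin n)) [DecidableRel G.Adj]
    (P : Finset (Finset (Fin n))) : ℝ :=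
  sInf {r | ∃ A : Finset (Fin n), A.Nonempty ∧ (∀ v ∈ A, ∃ W ∈ P, v ∈ W) ∧
    (∀ W ∈ P, (A ∩ W).card ≤ 1) ∧ r = (eBoundary G A : ℝ) / (volG G A : ℝ)}

/-! ### The set-valued 1-Laplacian and the p-Laplacian operator -/

/-- The set `Δ_1 x`. -/
def Delta1Set {n : ℕ} (G : SimpleGraph (Fin n)) [DecidableRel G.Adj] (x : Fin n → ℝ) :
    Set (Fin n → ℝ) :=
  {v | ∃ z : Fin n → Fin n → ℝ,
    (∀ i j, G.Adj i j → z i j ∈ Sgn (x i - x j)) ∧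
    (∀ i j, G.Adj i j → z i j = -z j i) ∧
    v = fun i => ∑ j : Fin n, if G.Adj i j then z i j else 0}

/-- The `p`-Laplacian `Δ_p x` for `p > 1`. -/
def DeltaP {n : ℕ} (G : SimpleGraph (Fin n)) [DecidableRel G.Adj] (p : ℝ) (x : Fin n → ℝ) :
    Fin n → ℝ :=
  fun i => ∑ j : Fin n, if G.Adj i j then |x i - x j| ^ (p - 2) * (x i - x j) else 0

/-- The normalized eigenspace `Ŝ_λ(Δ_p)`. -/
def hatS {n : ℕ} (G : SimpleGraph (Fin n)) [DecidableRel G.Adj] (p lam : ℝ) :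
    Set (Fin n → ℝ) :=
  {x | ‖x‖ = 1 ∧ IsEigenpair G p lam x}

open Filter Real Topology

lemma abs_z_eq (d q : ℝ) (hq : 1 < q) : |(|d| ^ (q - 2) * d)| = |d| ^ (q - 1) := by
  rcases eq_or_ne d 0 with h | h
  · simp [h, Real.zero_rpow (by linarith : q - 1 ≠ 0)]
  · rw [abs_mul, abs_of_nonneg (Real.rpow_nonneg (abs_nonneg d) _),
      show q - 1 = (q - 2) + 1 from by ring, Real.rpow_add_one (abs_ne_zero.mpr h)]

lemma pos_limit (d : ℕ → ℝ) (d0 : ℝ) (hd0 : 0 < d0) (hd : Tendsto d atTop (nhds d0))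
    (q : ℕ → ℝ) (hq1 : Tendsto q atTop (nhds 1)) :
    Tendsto (fun m => |d m| ^ (q m - 2) * d m) atTop (nhds 1) := by
  have h1 : Tendsto (fun m => d m ^ (q m - 1)) atTop (nhds 1) := by
    have hc := (Real.continuousAt_rpow (d0, 0) (Or.inl hd0.ne')).tendsto.comp
      (hd.prodMk_nhds (by simpa using hq1.sub_const 1))
    simpa [Function.comp_def] using hc
  have hev : ∀ᶠ m in atTop, d m ^ (q m - 1) = |d m| ^ (q m - 2) * d m := by
    filter_upwards [hd (Ioi_mem_nhds hd0 : Set.Ioi (0:ℝ) ∈ nhds d0)] with m hm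
    have hm' : 0 < d m := hm
    rw [abs_of_pos hm', show q m - 1 = (q m - 2) + 1 from by ring,
      Real.rpow_add_one hm'.ne']
  exact h1.congr' hev

lemma sgn_limit (d : ℕ → ℝ) (d0 : ℝ) (hd : Tendsto d atTop (nhds d0))
    (q : ℕ → ℝ) (hq : ∀ m, 1 < q m) (hq1 : Tendsto q atTop (nhds 1))
    (hbd : ∀ m, |d m| ≤ 2) (zl : ℝ)
    (hz : Tendsto (fun m => |d m| ^ (q m - 2) * d m) atTop (nhds zl)) :
    zl ∈ Sgn d0 := by
  rcases lt_trichotomy 0 d0 with h0 | h0 | h0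
  · have := tendsto_nhds_unique hz (pos_limit d d0 h0 hd q hq1)
    simp [Sgn, h0, this]
  · have habs : Tendsto (fun m => |(|d m| ^ (q m - 2) * d m)|) atTop (nhds |zl|) := hz.abs
    have hb : Tendsto (fun m => (2:ℝ) ^ (q m - 1)) atTop (nhds 1) := by
      have hc := (Real.continuousAt_rpow ((2:ℝ), 0) (Or.inl two_ne_zero)).tendsto.comp
        ((tendsto_const_nhds (x := (2:ℝ))).prodMk_nhds (by simpa using hq1.sub_const 1))
      simpa [Function.comp_def] using hc
    have hle : |zl| ≤ 1 := by
      refine le_of_tendsto_of_tendsto' habs hb ?_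
      intro m
      rw [abs_z_eq _ _ (hq m)]
      exact Real.rpow_le_rpow (abs_nonneg _) (hbd m) (by linarith [hq m])
    have := abs_le.mp hle
    simp only [Sgn, ← h0, lt_irrefl, if_false]
    exact ⟨this.1, this.2⟩
  · have hneg : Tendsto (fun m => |(-(d m))| ^ (q m - 2) * (-(d m))) atTop (nhds (-zl)) := by
      have : (fun m => |(-(d m))| ^ (q m - 2) * (-(d m))) =
          fun m => -(|d m| ^ (q m - 2) * d m) := by
        funext m; rw [abs_neg]; ring
      rw [this]; exact hz.neg
    have := tendsto_nhds_unique hneg (pos_limit (fun m => -(d m)) (-d0) (by linarith) hd.neg q hq1)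
    have hzl : zl = -1 := by linarith
    simp [Sgn, h0, not_lt_of_gt h0, hzl]

lemma scale_term (c : ℝ) (hc : 0 < c) (p t : ℝ) :
    |c * t| ^ (p - 2) * (c * t) = c ^ (p - 1) * (|t| ^ (p - 2) * t) := by
  rw [abs_mul, abs_of_pos hc, Real.mul_rpow hc.le (abs_nonneg t),
    show p - 1 = (p - 2) + 1 from by ring, Real.rpow_add_one hc.ne']
  ring

lemma eig_smul {n : ℕ} (G : SimpleGraph (Fin n)) [DecidableRel G.Adj] {p l : ℝ}
    {x : Fin n → ℝ} {c : ℝ} (hc : 0 < c)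
    (h : IsEigenpairP G p l x) : IsEigenpairP G p l (c • x) := by
  refine ⟨smul_ne_zero hc.ne' h.1, fun i => ?_⟩
  have h2 := h.2 i
  simp only [Pi.smul_apply, smul_eq_mul]
  have key : ∀ j, (if G.Adj i j then |c * x i - c * x j| ^ (p - 2) * (c * x i - c * x j) else 0)
      = c ^ (p - 1) * (if G.Adj i j then |x i - x j| ^ (p - 2) * (x i - x j) else 0) := by
    intro j
    split
    · rw [← mul_sub]; exact scale_term c hc p _
    · ring
  rw [Finset.sum_congr rfl (fun j _ => key j), ← Finset.mul_sum, h2,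
    scale_term c hc p (x i)]
  ring

/-- **Limits of `Δ_{p_m}`-eigenvalues as `p_m → 1⁺` are `Δ_1`-eigenvalues.** -/
theorem stmt12 {n : ℕ} (G : SimpleGraph (Fin n)) [DecidableRel G.Adj]
    (hdeg : ∀ i, 0 < G.degree i) (p : ℕ → ℝ) (hp : ∀ m, 1 < p m)
    (hplim : Filter.Tendsto p Filter.atTop (nhds 1))
    (lam : ℕ → ℝ) (hlam : ∀ m, ∃ x : Fin n → ℝ, IsEigenpairP G (p m) (lam m) x)
    (l : ℝ) (hlim : Filter.Tendsto lam Filter.atTop (nhds l)) :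
    ∃ x : Fin n → ℝ, IsEigenpair1 G l x := by
  -- normalized eigenvectors
  have hex : ∀ m, ∃ x : Fin n → ℝ, ‖x‖ = 1 ∧ IsEigenpairP G (p m) (lam m) x := by
    intro m
    obtain ⟨y, hy⟩ := hlam m
    have hn : 0 < ‖y‖ := norm_pos_iff.mpr hy.1
    refine ⟨‖y‖⁻¹ • y, ?_, eig_smul G (inv_pos.mpr hn) hy⟩
    rw [norm_smul, norm_inv, norm_norm, inv_mul_cancel₀ hn.ne']
  choose x hx1 hx2 using hex
  have hxb : ∀ m i, |x m i| ≤ 1 := by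
    intro m i
    have := norm_le_pi_norm (x m) i
    rwa [hx1 m, Real.norm_eq_abs] at this
  -- the auxiliary sequences
  set z : ℕ → Fin n → Fin n → ℝ :=
    fun m i j => |x m i - x m j| ^ (p m - 2) * (x m i - x m j) with hzdef
  set w : ℕ → Fin n → ℝ := fun m i => |x m i| ^ (p m - 2) * x m i with hwdef
  -- bound on p
  obtain ⟨P, hP⟩ := hplim.bddAbove_range
  -- bounds
  have hdb : ∀ m i j, |x m i - x m j| ≤ 2 := by
    intro m i j
    calc |x m i - x m j| ≤ |x m i| + |x m j| := abs_sub _ _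
    _ ≤ 2 := by linarith [hxb m i, hxb m j]
  have hwb : ∀ m i, |w m i| ≤ 1 := by
    intro m i
    rw [hwdef]
    simp only
    rw [abs_z_eq _ _ (hp m)]
    exact Real.rpow_le_one (abs_nonneg _) (hxb m i) (by linarith [hp m])
  have hzb : ∀ m i j, |z m i j| ≤ 2 ^ (P - 1) := by
    intro m i j
    rw [hzdef]
    simp only
    rw [abs_z_eq _ _ (hp m)]
    calc |x m i - x m j| ^ (p m - 1) ≤ 2 ^ (p m - 1) :=
        Real.rpow_le_rpow (abs_nonneg _) (hdb m i j) (by linarith [hp m])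
    _ ≤ 2 ^ (P - 1) := Real.rpow_le_rpow_of_exponent_le one_le_two
        (by have := hP (Set.mem_range_self m); linarith)
  -- compactness
  set C : ℝ := max 1 (2 ^ (P - 1)) with hC
  have hC0 : 0 ≤ C := le_trans zero_le_one (le_max_left _ _)
  set u : ℕ → (Fin n → ℝ) × (Fin n → ℝ) × (Fin n → Fin n → ℝ) :=
    fun m => (x m, w m, z m) with hudef
  have humem : ∀ m, u m ∈ Metric.closedBall (0 : (Fin n → ℝ) × (Fin n → ℝ) × (Fin n → Fin n → ℝ)) C := by
    intro m
    rw [Metric.mem_closedBall, dist_zero_right, Prod.norm_def, Prod.norm_def]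
    refine max_le ?_ (max_le ?_ ?_)
    · rw [hx1 m]; exact le_max_left _ _
    · refine (pi_norm_le_iff_of_nonneg hC0).mpr fun i => ?_
      rw [Real.norm_eq_abs]
      exact le_trans (hwb m i) (le_max_left _ _)
    · refine (pi_norm_le_iff_of_nonneg hC0).mpr fun i => ?_
      refine (pi_norm_le_iff_of_nonneg hC0).mpr fun j => ?_
      rw [Real.norm_eq_abs]
      exact le_trans (hzb m i j) (le_max_right _ _)
  obtain ⟨L, -, φ, hφ, hul⟩ :=
    tendsto_subseq_of_bounded Metric.isBounded_closedBall humem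
  have hφtop : Tendsto φ atTop atTop := hφ.tendsto_atTop
  have hpφ : Tendsto (fun k => p (φ k)) atTop (nhds 1) := hplim.comp hφtop
  have hlamφ : Tendsto (fun k => lam (φ k)) atTop (nhds l) := hlim.comp hφtop
  -- component limits
  have hXf : Tendsto (fun k => x (φ k)) atTop (nhds L.1) :=
    (continuous_fst.tendsto L).comp hul
  have hWf : Tendsto (fun k => w (φ k)) atTop (nhds L.2.1) :=
    (continuous_fst.tendsto L.2).comp ((continuous_snd.tendsto L).comp hul)
  have hZf : Tendsto (fun k => z (φ k)) atTop (nhds L.2.2) :=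
    (continuous_snd.tendsto L.2).comp ((continuous_snd.tendsto L).comp hul)
  set X := L.1
  set W := L.2.1
  set Z := L.2.2
  have hXpt : ∀ i, Tendsto (fun k => x (φ k) i) atTop (nhds (X i)) :=
    fun i => tendsto_pi_nhds.mp hXf i
  have hWpt : ∀ i, Tendsto (fun k => w (φ k) i) atTop (nhds (W i)) :=
    fun i => tendsto_pi_nhds.mp hWf i
  have hZpt : ∀ i j, Tendsto (fun k => z (φ k) i j) atTop (nhds (Z i j)) :=
    fun i j => tendsto_pi_nhds.mp (tendsto_pi_nhds.mp hZf i) j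
  -- X ≠ 0
  have hXnorm : ‖X‖ = 1 := by
    have h1 : Tendsto (fun k => ‖x (φ k)‖) atTop (nhds ‖X‖) := hXf.norm
    have h2 : Tendsto (fun k => ‖x (φ k)‖) atTop (nhds 1) := by
      simp only [hx1]; exact tendsto_const_nhds
    exact tendsto_nhds_unique h1 h2
  have hXne : X ≠ 0 := by
    intro h; rw [h, norm_zero] at hXnorm; norm_num at hXnorm
  -- Sgn memberships
  have hWmem : ∀ i, W i ∈ Sgn (X i) := by
    intro i
    exact sgn_limit (fun k => x (φ k) i) (X i) (hXpt i) (fun k => p (φ k))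
      (fun k => hp (φ k)) hpφ (fun k => le_trans (hxb (φ k) i) one_le_two) (W i) (hWpt i)
  have hZmem : ∀ i j, Z i j ∈ Sgn (X i - X j) := by
    intro i j
    exact sgn_limit (fun k => x (φ k) i - x (φ k) j) (X i - X j)
      ((hXpt i).sub (hXpt j)) (fun k => p (φ k)) (fun k => hp (φ k)) hpφ
      (fun k => hdb (φ k) i j) (Z i j) (hZpt i j)
  -- antisymmetry
  have hZanti : ∀ i j, Z i j = -Z j i := by
    intro i j
    have h1 := hZpt i j
    have h2 : Tendsto (fun k => z (φ k) i j) atTop (nhds (-(Z j i))) := by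
      refine (hZpt j i).neg.congr fun k => ?_
      rw [hzdef]; simp only
      rw [abs_sub_comm]; ring
    exact tendsto_nhds_unique h1 h2
  -- equations pass to the limit
  have heq : ∀ i, (∑ j : Fin n, if G.Adj i j then Z i j else 0) =
      l * (G.degree i : ℝ) * W i := by
    intro i
    have hL : Tendsto (fun k => ∑ j : Fin n, if G.Adj i j then z (φ k) i j else 0)
        atTop (nhds (∑ j : Fin n, if G.Adj i j then Z i j else 0)) := by
      refine tendsto_finset_sum _ fun j _ => ?_
      split
      · exact hZpt i j
      · exact tendsto_const_nhds
    have hR : Tendsto (fun k => lam (φ k) * (G.degree i : ℝ) * w (φ k) i)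
        atTop (nhds (l * (G.degree i : ℝ) * W i)) :=
      (hlamφ.mul_const _).mul (hWpt i)
    have hEq : (fun k => ∑ j : Fin n, if G.Adj i j then z (φ k) i j else 0) =
        fun k => lam (φ k) * (G.degree i : ℝ) * w (φ k) i := by
      funext k
      exact (hx2 (φ k)).2 i
    rw [hEq] at hL
    exact tendsto_nhds_unique hL hR
  exact ⟨X, hXne, Z, fun i j _ => hZmem i j, fun i j _ => hZanti i j,
    fun i => ⟨W i, hWmem i, (heq i).symm⟩⟩
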